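/- F₂ is atomless conditionally to F₁ if and only if for every A ∈ F₂ with P[E[1_A | F₁] > 0] > 0 there exists B ∈ F₂ with B ⊂ A such that P[ 0 < E[1_B | F₁] < E[1_A | F₁] ] > 0. -/

import Mathlib

open MeasureTheory
open scoped ENNReal

/-- `F₂` is atomless conditionally to `F₁`: for every `A ∈ F₂` there is `B ∈ F₂`, `B ⊆ A`,
with `0 < E[1_B | F₁] < E[1_A | F₁]` almost surely on the set `{E[1_A | F₁] > 0}`. -/
def CondAtomless {Ω : Type*} (m1 m2 : MeasurableSpace Ω) (μ : @Measure Ω m2) : Prop :=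
  ∀ A : Set Ω, MeasurableSet[m2] A →
    ∃ B : Set Ω, MeasurableSet[m2] B ∧ B ⊆ A ∧
      ∀ᵐ ω ∂μ, 0 < (μ[A.indicator (fun _ => (1 : ℝ)) | m1]) ω →
        0 < (μ[B.indicator (fun _ => (1 : ℝ)) | m1]) ω ∧
        (μ[B.indicator (fun _ => (1 : ℝ)) | m1]) ω <
          (μ[A.indicator (fun _ => (1 : ℝ)) | m1]) ω

section Aux

variable {Ω : Type*} {m1 m2 : MeasurableSpace Ω} {μ : @Measure Ω m2}

/-- Abbreviation for the conditional expectation of an indicator. -/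
noncomputable def cE (m1 : MeasurableSpace Ω) (μ : @Measure Ω m2) (B : Set Ω) : Ω → ℝ :=
  μ[B.indicator (fun _ => (1 : ℝ)) | m1]

lemma cE_def (B : Set Ω) : μ[B.indicator (fun _ => (1 : ℝ)) | m1] = cE m1 μ B := rfl

lemma intInd [IsFiniteMeasure μ] {B : Set Ω} (hB : MeasurableSet[m2] B) :
    Integrable (B.indicator fun _ => (1 : ℝ)) μ :=
  (integrable_const 1).indicator hB

lemma cE_meas (B : Set Ω) : Measurable[m1] (cE m1 μ B) :=
  stronglyMeasurable_condExp.measurable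

lemma cE_inter [IsFiniteMeasure μ] {B C : Set Ω} (hB : MeasurableSet[m2] B)
    (hC : MeasurableSet[m1] C) :
    cE m1 μ (B ∩ C) =ᵐ[μ] C.indicator (cE m1 μ B) := by
  have h : (B ∩ C).indicator (fun _ => (1 : ℝ)) = C.indicator (B.indicator fun _ => (1 : ℝ)) := by
    ext ω
    by_cases h1 : ω ∈ B <;> by_cases h2 : ω ∈ C <;>
      simp [Set.indicator, h1, h2]
  unfold cE
  rw [h]
  exact condExp_indicator (intInd hB) hC

lemma cE_union [IsFiniteMeasure μ] {B C : Set Ω} (hB : MeasurableSet[m2] B)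
    (hC : MeasurableSet[m2] C) (hd : Disjoint B C) :
    cE m1 μ (B ∪ C) =ᵐ[μ] cE m1 μ B + cE m1 μ C := by
  have h : (B ∪ C).indicator (fun _ => (1 : ℝ))
      = B.indicator (fun _ => (1 : ℝ)) + C.indicator (fun _ => (1 : ℝ)) :=
    Set.indicator_union_of_disjoint hd _
  unfold cE
  rw [h]
  exact condExp_add (intInd hB) (intInd hC) m1

end Aux

/-- `F₂` is atomless conditionally to `F₁` if and only if for every `A ∈ F₂` with
`P[E[1_A|F₁] > 0] > 0` there exists `B ∈ F₂`, `B ⊆ A`, such that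
`P[0 < E[1_B|F₁] < E[1_A|F₁]] > 0`. -/
theorem stmt_1 {Ω : Type*} {m1 m2 : MeasurableSpace Ω} (hm : m1 ≤ m2)
    (μ : @Measure Ω m2) [IsProbabilityMeasure μ] :
    CondAtomless m1 m2 μ ↔
      ∀ A : Set Ω, MeasurableSet[m2] A →
        0 < μ {ω | 0 < (μ[A.indicator (fun _ => (1 : ℝ)) | m1]) ω} →
        ∃ B : Set Ω, MeasurableSet[m2] B ∧ B ⊆ A ∧
          0 < μ {ω | 0 < (μ[B.indicator (fun _ => (1 : ℝ)) | m1]) ω ∧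
            (μ[B.indicator (fun _ => (1 : ℝ)) | m1]) ω <
              (μ[A.indicator (fun _ => (1 : ℝ)) | m1]) ω} := by
  classical
  simp only [cE_def]
  constructor
  · -- easy direction
    intro h A hA hApos
    obtain ⟨B, hB, hBA, hae⟩ := h A hA
    simp only [cE_def] at hae
    refine ⟨B, hB, hBA, lt_of_lt_of_le hApos (measure_mono_ae ?_)⟩
    filter_upwards [hae] with ω hω h0
    exact hω h0
  · -- hard direction
    intro h A hA
    by_cases hS0 : μ {ω | 0 < cE m1 μ A ω} = 0
    · refine ⟨∅, MeasurableSet.empty, Set.empty_subset A, ?_⟩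
      have hae : ∀ᵐ ω ∂μ, ω ∉ {ω | 0 < cE m1 μ A ω} := measure_eq_zero_iff_ae_notMem.mp hS0
      simp only [cE_def]
      filter_upwards [hae] with ω hω hpos
      exact absurd hpos hω
    -- main case
    -- the supremum of achievable "good set" measures
    set V : Set ℝ≥0∞ := (fun B => μ {ω | 0 < cE m1 μ B ω ∧ cE m1 μ B ω < cE m1 μ A ω}) ''
      {B | MeasurableSet[m2] B ∧ B ⊆ A} with hV
    have hVne : V.Nonempty := ⟨_, ⟨∅, ⟨MeasurableSet.empty, Set.empty_subset A⟩, rfl⟩⟩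
    obtain ⟨u, _, hu_tend, hu_mem⟩ := exists_seq_tendsto_sSup hVne (OrderTop.bddAbove V)
    choose Bn hBn hBval using hu_mem
    -- the good sets and their disjointification
    set Gn : ℕ → Set Ω :=
      fun n => {ω | 0 < cE m1 μ (Bn n) ω ∧ cE m1 μ (Bn n) ω < cE m1 μ A ω} with hGn
    have hGn_meas : ∀ n, MeasurableSet[m1] (Gn n) := fun n =>
      (measurableSet_lt measurable_const (cE_meas _)).inter
        (measurableSet_lt (cE_meas _) (cE_meas _))
    set Dn : ℕ → Set Ω := disjointed Gn with hDn
    have hDn_meas : ∀ n, MeasurableSet[m1] (Dn n) := MeasurableSet.disjointed hGn_meas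
    set Bstar : Set Ω := ⋃ n, Bn n ∩ Dn n with hBstar
    have hBstar_meas : MeasurableSet[m2] Bstar :=
      MeasurableSet.iUnion fun n => ((hBn n).1).inter (hm _ (hDn_meas n))
    have hBstar_sub : Bstar ⊆ A := Set.iUnion_subset fun n =>
      (Set.inter_subset_left).trans (hBn n).2
    set Gu : Set Ω := ⋃ n, Gn n with hGu
    have hGu_meas : MeasurableSet[m1] Gu := MeasurableSet.iUnion hGn_meas
    have hBstar_Gu : Bstar ⊆ Gu := Set.iUnion_subset fun n =>
      Set.inter_subset_right.trans ((disjointed_subset Gn n).trans (Set.subset_iUnion Gn n))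
    -- (K1) set identity
    have K1 : ∀ n, Bstar ∩ Dn n = Bn n ∩ Dn n := by
      intro n
      apply Set.Subset.antisymm
      · rintro x ⟨hx1, hx2⟩
        obtain ⟨m, hxm⟩ := Set.mem_iUnion.mp hx1
        rcases eq_or_ne m n with rfl | hmn
        · exact ⟨hxm.1, hx2⟩
        · exact absurd (Set.disjoint_iff.mp ((disjoint_disjointed Gn) hmn)
            (Set.mem_inter hxm.2 hx2)) (Set.notMem_empty x)
      · exact fun x hx => ⟨Set.mem_iUnion.mpr ⟨n, hx⟩, hx.2⟩
    -- (K2) on Dn n, cE Bstar = cE (Bn n)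
    have K2 : ∀ n, ∀ᵐ ω ∂μ, ω ∈ Dn n → cE m1 μ Bstar ω = cE m1 μ (Bn n) ω := by
      intro n
      have h1 := cE_inter (μ := μ) hBstar_meas (hDn_meas n)
      have h2 := cE_inter (μ := μ) (hBn n).1 (hDn_meas n)
      rw [K1 n] at h1
      filter_upwards [h1, h2] with ω e1 e2 hω
      have := e1.symm.trans e2
      rwa [Set.indicator_of_mem hω, Set.indicator_of_mem hω] at this
    -- (K3) off Gu, cE Bstar = 0
    have K3 : ∀ᵐ ω ∂μ, ω ∉ Gu → cE m1 μ Bstar ω = 0 := by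
      have h1 := cE_inter (μ := μ) hBstar_meas hGu_meas
      rw [Set.inter_eq_self_of_subset_left hBstar_Gu] at h1
      filter_upwards [h1] with ω e1 hω
      rw [e1, Set.indicator_of_notMem hω]
    -- (K4) on Gu, 0 < cE Bstar < cE A
    have K4 : ∀ᵐ ω ∂μ, ω ∈ Gu → 0 < cE m1 μ Bstar ω ∧ cE m1 μ Bstar ω < cE m1 μ A ω := by
      filter_upwards [ae_all_iff.mpr K2] with ω h2 hω
      have : ω ∈ ⋃ n, Dn n := by rw [hDn, iUnion_disjointed]; exact hω
      obtain ⟨n, hn⟩ := Set.mem_iUnion.mp this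
      have hGnn : ω ∈ Gn n := disjointed_subset Gn n hn
      rw [h2 n hn]
      exact hGnn
    -- (K5) μ Gu ≥ sSup V
    have K5 : sSup V ≤ μ Gu := by
      refine le_of_tendsto hu_tend (Filter.Eventually.of_forall fun n => ?_)
      rw [← hBval n]
      exact measure_mono (Set.subset_iUnion Gn n)
    -- the remainder is null
    have hSG : μ ({ω | 0 < cE m1 μ A ω} \ Gu) = 0 := by
      by_contra hne
      have hpos' : 0 < μ ({ω | 0 < cE m1 μ A ω} \ Gu) := pos_iff_ne_zero.mpr hne
      set A' : Set Ω := A ∩ Guᶜ with hA'def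
      have hA' : MeasurableSet[m2] A' := hA.inter (hm _ hGu_meas.compl)
      have hFA' : cE m1 μ A' =ᵐ[μ] Guᶜ.indicator (cE m1 μ A) :=
        cE_inter (μ := μ) hA hGu_meas.compl
      have h1 : 0 < μ {ω | 0 < cE m1 μ A' ω} := by
        refine lt_of_lt_of_le hpos' (measure_mono_ae ?_)
        filter_upwards [hFA'] with ω e hmem
        have : cE m1 μ A' ω = cE m1 μ A ω := by
          rw [e, Set.indicator_of_mem (show ω ∈ Guᶜ from hmem.2)]
        show 0 < cE m1 μ A' ω
        rw [this]
        exact hmem.1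
      obtain ⟨B', hB', hB'A', hT'pos⟩ := h A' hA' h1
      set T' : Set Ω := {ω | 0 < cE m1 μ B' ω ∧ cE m1 μ B' ω < cE m1 μ A' ω} with hT'def
      have hB'sub : B' ⊆ Guᶜ := hB'A'.trans Set.inter_subset_right
      have hFB' : cE m1 μ B' =ᵐ[μ] Guᶜ.indicator (cE m1 μ B') := by
        have h2 := cE_inter (μ := μ) hB' hGu_meas.compl
        rwa [Set.inter_eq_self_of_subset_left hB'sub] at h2
      set B'' : Set Ω := Bstar ∪ B' with hB''def
      have hB''_meas : MeasurableSet[m2] B'' := hBstar_meas.union hB'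
      have hB''_sub : B'' ⊆ A := Set.union_subset hBstar_sub (hB'A'.trans Set.inter_subset_left)
      have hdisj : Disjoint Bstar B' :=
        Set.disjoint_of_subset hBstar_Gu hB'sub disjoint_compl_right
      have hFB'' : cE m1 μ B'' =ᵐ[μ] cE m1 μ Bstar + cE m1 μ B' :=
        cE_union hBstar_meas hB' hdisj
      -- superset fact
      have hsup : ∀ᵐ ω ∂μ, ω ∈ Gu ∪ T' →
          0 < cE m1 μ B'' ω ∧ cE m1 μ B'' ω < cE m1 μ A ω := by
        filter_upwards [hFB'', hFB', hFA', K3, K4] with ω e1 e2 e3 e4 e5 hmem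
        by_cases hg : ω ∈ Gu
        · have hb' : cE m1 μ B' ω = 0 := by
            rw [e2, Set.indicator_of_notMem (show ω ∉ Guᶜ from fun hc => hc hg)]
          have h5 := e5 hg
          have he : cE m1 μ B'' ω = cE m1 μ Bstar ω := by
            rw [e1]; simp [hb']
          rw [he]
          exact h5
        · have hT : ω ∈ T' := hmem.resolve_left hg
          have hb : cE m1 μ Bstar ω = 0 := e4 hg
          have hA'A : cE m1 μ A' ω = cE m1 μ A ω := by
            rw [e3, Set.indicator_of_mem (show ω ∈ Guᶜ from hg)]
          have he : cE m1 μ B'' ω = cE m1 μ B' ω := by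
            rw [e1]; simp [hb]
          rw [he]
          exact ⟨hT.1, hA'A ▸ hT.2⟩
      -- measure arithmetic
      have hB''le : μ {ω | 0 < cE m1 μ B'' ω ∧ cE m1 μ B'' ω < cE m1 μ A ω} ≤ sSup V :=
        le_sSup ⟨B'', ⟨hB''_meas, hB''_sub⟩, rfl⟩
      have hge : μ (Gu ∪ T') ≤ μ {ω | 0 < cE m1 μ B'' ω ∧ cE m1 μ B'' ω < cE m1 μ A ω} :=
        measure_mono_ae hsup
      have hT'Gu : μ (T' ∩ Gu) = 0 := by
        rw [measure_eq_zero_iff_ae_notMem]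
        filter_upwards [hFB'] with ω e hmem
        have : cE m1 μ B' ω = 0 := by
          rw [e, Set.indicator_of_notMem (show ω ∉ Guᶜ from fun hc => hc hmem.2)]
        exact absurd this (ne_of_gt hmem.1.1)
      have hTdiff : μ (T' \ Gu) = μ T' := by
        rw [← Set.diff_self_inter]
        exact measure_diff_null hT'Gu
      have hunion : μ (Gu ∪ T') = μ Gu + μ (T' \ Gu) := by
        rw [← Set.union_diff_self]
        exact measure_union' disjoint_sdiff_self_right (hm _ hGu_meas)
      have hchain : μ Gu + μ T' ≤ μ Gu := by
        calc μ Gu + μ T' = μ (Gu ∪ T') := by rw [hunion, hTdiff]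
          _ ≤ _ := hge
          _ ≤ sSup V := hB''le
          _ ≤ μ Gu := K5
      exact absurd hchain (not_le.mpr (ENNReal.lt_add_right (measure_ne_top μ Gu)
        (ne_of_gt hT'pos)))
    -- conclude
    refine ⟨Bstar, hBstar_meas, hBstar_sub, ?_⟩
    have hSsub : ∀ᵐ ω ∂μ, ω ∉ {ω | 0 < cE m1 μ A ω} \ Gu := measure_eq_zero_iff_ae_notMem.mp hSG
    simp only [cE_def]
    filter_upwards [K4, hSsub] with ω h4 hns hpos
    have hωGu : ω ∈ Gu := by
      by_contra hg
      exact hns ⟨hpos, hg⟩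
    exact h4 hωGu
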